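/- Let Δ and Γ be simplicial complexes, and let 𝒞 = C_1 ⊔ ⋯ ⊔ C_k and 𝒟 = D_1 ⊔ ⋯ ⊔ D_k be nested k-colourings of Δ and Γ, each endowed with a nesting order. If Σ is the simplicial complex with ordered proper vertex k-colouring ℰ satisfying I(Δ, 𝒞) · I(Γ, 𝒟) = I(Σ, ℰ), then ℰ is a nested colouring of Σ endowed with the nesting order; equivalently, the product ideal I(Δ, 𝒞) · I(Γ, 𝒟) is Q_k-Borel. -/

import Mathlib

open MvPolynomial

/-- A simplicial complex on a vertex type `V`: a collection of finite subsets (faces)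
containing the empty set and closed under taking subsets. -/
structure SimpComplex (V : Type) where
  faces : Set (Finset V)
  empty_mem : ∅ ∈ faces
  down_closed : ∀ {σ τ : Finset V}, σ ∈ faces → τ ⊆ σ → τ ∈ faces

namespace SimpComplex

variable {V : Type}

/-- `A` is an independent set of `Δ`: no two distinct members lie in a common face. -/
def IsIndep (Δ : SimpComplex V) (A : Set V) : Prop :=
  ∀ u ∈ A, ∀ v ∈ A, u ≠ v → ∀ σ ∈ Δ.faces, ¬(u ∈ σ ∧ v ∈ σ)

/-- The link of a vertex `v` in `Δ`. -/
def link [DecidableEq V] (Δ : SimpComplex V) (v : V) : Set (Finset V) :=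
  {τ | τ ∈ Δ.faces ∧ v ∉ τ ∧ insert v τ ∈ Δ.faces}

end SimpComplex

/-- A family of finsets indexed by `Fin k` is a partition of the vertex set. -/
def IsPartition {V : Type} {k : ℕ} (C : Fin k → Finset V) : Prop :=
  ∀ v : V, ∃! i, v ∈ C i

/-- A proper vertex `k`-colouring of a simplicial complex: a partition into independent sets. -/
def IsProperColouring {V : Type} {k : ℕ} (Δ : SimpComplex V) (C : Fin k → Finset V) : Prop :=
  IsPartition C ∧ ∀ i, Δ.IsIndep (C i : Set V)

/-- An ordered proper vertex `k`-colouring, given by a duplicate-free list (recording the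
linear order) for each colour class; the classes partition the vertices and are independent. -/
def IsOrderedColouring {V : Type} {k : ℕ} (Δ : SimpComplex V) (C : Fin k → List V) : Prop :=
  (∀ i, (C i).Nodup) ∧ (∀ v : V, ∃! i, v ∈ C i) ∧ (∀ i, Δ.IsIndep {v | v ∈ C i})

/-- The given linear orders on the colour classes are nesting orders: within a class,
if `v` comes before `u` then `link(u) ⊆ link(v)`.  (Thus the colouring is nested and is
endowed with the nesting order.) -/
def IsNestingOrdered {V : Type} [DecidableEq V] {k : ℕ} (Δ : SimpComplex V)
    (C : Fin k → List V) : Prop :=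
  ∀ i, (C i).Pairwise (fun v u => Δ.link u ⊆ Δ.link v)

/-- The index vector of a set `σ` with respect to the ordered colouring `C`:
`eVec C σ i = j` iff the (unique) element of `σ ∩ C i` is the `j`-th element of the list
`C i` (counting from 1), and `0` if `σ ∩ C i = ∅`. -/
def eVec {V : Type} [DecidableEq V] {k : ℕ} (C : Fin k → List V) (σ : Finset V)
    (i : Fin k) : ℕ :=
  if (C i).any (fun v => decide (v ∈ σ)) then
    (C i).findIdx (fun v => decide (v ∈ σ)) + 1
  else 0

/-- The uniform monomial of a face `σ`:  `∏ i, x_i ^ (#C_i - e_i(σ)) * y_i ^ (e_i(σ))`,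
where `x_i = X (Sum.inl i)` and `y_i = X (Sum.inr i)`. -/
noncomputable def uniformMonomial (K : Type) [Field K] {V : Type} [DecidableEq V] {k : ℕ}
    (C : Fin k → List V) (σ : Finset V) : MvPolynomial (Fin k ⊕ Fin k) K :=
  ∏ i : Fin k, (X (Sum.inl i) ^ ((C i).length - eVec C σ i) * X (Sum.inr i) ^ eVec C σ i)

/-- The uniform face ideal of `Δ` with respect to the ordered colouring `C`. -/
noncomputable def uniformFaceIdeal (K : Type) [Field K] {V : Type} [DecidableEq V] {k : ℕ}
    (Δ : SimpComplex V) (C : Fin k → List V) : Ideal (MvPolynomial (Fin k ⊕ Fin k) K) :=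
  Ideal.span {m | ∃ σ ∈ Δ.faces, m = uniformMonomial K C σ}

/-- A monomial ideal of `K[x_1,…,x_k,y_1,…,y_k]` is `Q_k`-Borel, where `Q_k` is the poset on
the variables whose only relations are `x_i < y_i`:  for every monomial `m ∈ I` with
`y_i ∣ m`, the monomial `x_i·m/y_i` lies in `I`. -/
def IsQkBorel {k : ℕ} {K : Type} [Field K]
    (I : Ideal (MvPolynomial (Fin k ⊕ Fin k) K)) : Prop :=
  ∀ a : (Fin k ⊕ Fin k) →₀ ℕ, MvPolynomial.monomial a (1 : K) ∈ I →
    ∀ i : Fin k, a (Sum.inr i) ≠ 0 →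
      MvPolynomial.monomial
        (a - Finsupp.single (Sum.inr i) 1 + Finsupp.single (Sum.inl i) 1) (1 : K) ∈ I

/-! ### Auxiliary development -/

section Aux

variable {V : Type} [DecidableEq V] {k : ℕ}

lemma list_findIdx_congr {α : Type*} {p q : α → Bool} :
    ∀ l : List α, (∀ a ∈ l, p a = q a) → l.findIdx p = l.findIdx q
  | [], _ => rfl
  | a :: l, h => by
    rw [List.findIdx_cons, List.findIdx_cons, h a (.head _),
      list_findIdx_congr l (fun b hb => h b (.tail _ hb))]

lemma list_any_congr {α : Type*} {p q : α → Bool} :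
    ∀ l : List α, (∀ a ∈ l, p a = q a) → l.any p = l.any q
  | [], _ => rfl
  | a :: l, h => by
    rw [List.any_cons, List.any_cons, h a (.head _),
      list_any_congr l (fun b hb => h b (.tail _ hb))]

lemma eVec_congr {C : Fin k → List V} {σ τ : Finset V} {i : Fin k}
    (h : ∀ v ∈ C i, (v ∈ σ ↔ v ∈ τ)) : eVec C σ i = eVec C τ i := by
  unfold eVec
  have h' : ∀ v ∈ C i, (decide (v ∈ σ)) = (decide (v ∈ τ)) := fun v hv => by
    simp only [decide_eq_decide]; exact h v hv
  rw [list_findIdx_congr (C i) h', list_any_congr (C i) h']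

lemma eVec_le_length (C : Fin k → List V) (σ : Finset V) (i : Fin k) :
    eVec C σ i ≤ (C i).length := by
  unfold eVec
  split
  · next h =>
    have := List.findIdx_lt_length_of_exists (p := fun v => decide (v ∈ σ)) (xs := C i)
      (by simpa [List.any_eq_true] using h)
    omega
  · exact Nat.zero_le _

lemma eVec_eq_zero {C : Fin k → List V} {σ : Finset V} {i : Fin k}
    (h : ∀ v ∈ C i, v ∉ σ) : eVec C σ i = 0 := by
  unfold eVec
  rw [if_neg]
  simp only [List.any_eq_true, decide_eq_true_eq, not_exists]
  intro v
  rintro ⟨hv, hvσ⟩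
  exact h v hv hvσ

lemma eVec_eq_succ {C : Fin k → List V} {σ : Finset V} {i : Fin k} {j : ℕ}
    (hj : j < (C i).length) (hmem : (C i)[j] ∈ σ)
    (hfirst : ∀ j' (h' : j' < j), (C i)[j']'(h'.trans hj) ∉ σ) :
    eVec C σ i = j + 1 := by
  have hany : (C i).any (fun v => decide (v ∈ σ)) = true := by
    simp only [List.any_eq_true, decide_eq_true_eq]
    exact ⟨_, List.getElem_mem hj, hmem⟩
  unfold eVec
  rw [if_pos hany]
  congr 1
  have hlt : (C i).findIdx (fun v => decide (v ∈ σ)) < (C i).length :=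
    List.findIdx_lt_length.mpr (by simpa [List.any_eq_true] using hany)
  rcases lt_trichotomy ((C i).findIdx (fun v => decide (v ∈ σ))) j with h | h | h
  · exact absurd (by simpa using List.findIdx_getElem (w := hlt)) (hfirst _ h)
  · exact h
  · have := List.not_of_lt_findIdx (p := fun v => decide (v ∈ σ)) (xs := C i) (i := j) h
    simp [hmem] at this

lemma eVec_succ_elim {C : Fin k → List V} {σ : Finset V} {i : Fin k} {j : ℕ}
    (h : eVec C σ i = j + 1) :
    ∃ (hj : j < (C i).length), (C i)[j] ∈ σ ∧
      ∀ j' (h' : j' < j), (C i)[j']'(h'.trans hj) ∉ σ := by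
  unfold eVec at h
  split at h
  · next hany =>
    have hex : ∃ x ∈ C i, (fun v => decide (v ∈ σ)) x = true := by
      simpa [List.any_eq_true] using hany
    have hlt : (C i).findIdx (fun v => decide (v ∈ σ)) < (C i).length :=
      List.findIdx_lt_length.mpr hex
    have hj : j < (C i).length := by omega
    have hfi : (C i).findIdx (fun v => decide (v ∈ σ)) = j := by omega
    refine ⟨hj, ?_, ?_⟩
    · have := List.findIdx_getElem (w := hlt)
      simp only [hfi] at this
      simpa using this
    · intro j' h' hmem
      have := List.not_of_lt_findIdx (p := fun v => decide (v ∈ σ)) (xs := C i)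
        (i := j') (by omega)
      simp [hmem] at this
  · omega

variable {Δ : SimpComplex V} {C : Fin k → List V}

lemma indep_unique {A : Set V} (hA : Δ.IsIndep A) {σ : Finset V} (hσ : σ ∈ Δ.faces)
    {u v : V} (hu : u ∈ A) (hv : v ∈ A) (huσ : u ∈ σ) (hvσ : v ∈ σ) : u = v := by
  by_contra h
  exact hA u hu v hv h σ hσ ⟨huσ, hvσ⟩

lemma eVec_face_of_mem (hC : IsOrderedColouring Δ C) {σ : Finset V} (hσ : σ ∈ Δ.faces)
    {i : Fin k} {j : ℕ} (hj : j < (C i).length) (hm : (C i)[j] ∈ σ) :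
    eVec C σ i = j + 1 := by
  apply eVec_eq_succ hj hm
  intro j' h' hmem
  have heq : (C i)[j']'(h'.trans hj) = (C i)[j] :=
    indep_unique (hC.2.2 i) hσ (List.getElem_mem _) (List.getElem_mem _) hmem hm
  have := ((hC.1 i).getElem_inj_iff).mp heq
  omega

lemma mem_face_iff_eVec (hC : IsOrderedColouring Δ C) {σ : Finset V} (hσ : σ ∈ Δ.faces)
    {i : Fin k} {j : ℕ} (hj : j < (C i).length) :
    (C i)[j] ∈ σ ↔ eVec C σ i = j + 1 := by
  constructor
  · exact eVec_face_of_mem hC hσ hj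
  · intro h
    obtain ⟨hj', hmem, -⟩ := eVec_succ_elim h
    exact hmem

/-- unique colour class -/
lemma not_mem_other_class (hC : IsOrderedColouring Δ C) {v : V} {i i' : Fin k}
    (hv : v ∈ C i) (hne : i' ≠ i) : v ∉ C i' := fun hv' =>
  hne ((hC.2.1 v).unique hv' hv)

/-- The exponent vector of the uniform monomial. -/
noncomputable def expF (C : Fin k → List V) (σ : Finset V) : (Fin k ⊕ Fin k) →₀ ℕ :=
  ∑ i : Fin k, (Finsupp.single (Sum.inl i) ((C i).length - eVec C σ i)
    + Finsupp.single (Sum.inr i) (eVec C σ i))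

lemma expF_inl (C : Fin k → List V) (σ : Finset V) (j : Fin k) :
    expF C σ (Sum.inl j) = (C j).length - eVec C σ j := by
  unfold expF
  rw [Finsupp.finset_sum_apply]
  simp only [Finsupp.add_apply, Finsupp.single_apply, Sum.inl.injEq]
  rw [Finset.sum_add_distrib]
  simp [Finset.sum_ite_eq' Finset.univ j]

lemma expF_inr (C : Fin k → List V) (σ : Finset V) (j : Fin k) :
    expF C σ (Sum.inr j) = eVec C σ j := by
  unfold expF
  rw [Finsupp.finset_sum_apply]
  simp only [Finsupp.add_apply, Finsupp.single_apply, Sum.inr.injEq]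
  rw [Finset.sum_add_distrib]
  simp [Finset.sum_ite_eq' Finset.univ j]

lemma prod_monomial {K : Type} [Field K] {ι : Type*} (s : Finset ι)
    (f : ι → ((Fin k ⊕ Fin k) →₀ ℕ)) :
    (∏ i ∈ s, (monomial (f i) (1 : K))) = monomial (∑ i ∈ s, f i) (1 : K) := by
  classical
  induction s using Finset.induction with
  | empty => simp
  | insert _ _ h ih =>
    rw [Finset.prod_insert h, Finset.sum_insert h, ih, monomial_mul, one_mul]

lemma uniformMonomial_eq (K : Type) [Field K] (C : Fin k → List V) (σ : Finset V) :
    uniformMonomial K C σ = monomial (expF C σ) (1 : K) := by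
  unfold uniformMonomial expF
  rw [← prod_monomial]
  apply Finset.prod_congr rfl
  intro i _
  rw [X_pow_eq_monomial, X_pow_eq_monomial, monomial_mul, one_mul]

lemma ufi_eq (K : Type) [Field K] (Δ : SimpComplex V) (C : Fin k → List V) :
    uniformFaceIdeal K Δ C =
      Ideal.span ((fun e => monomial e (1 : K)) '' {e | ∃ σ ∈ Δ.faces, e = expF C σ}) := by
  unfold uniformFaceIdeal
  congr 1
  ext m
  simp only [Set.mem_image, Set.mem_setOf_eq]
  constructor
  · rintro ⟨σ, hσ, rfl⟩
    exact ⟨expF C σ, ⟨σ, hσ, rfl⟩, (uniformMonomial_eq K C σ).symm⟩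
  · rintro ⟨e, ⟨σ, hσ, rfl⟩, rfl⟩
    exact ⟨σ, hσ, (uniformMonomial_eq K C σ).symm⟩

lemma mem_ufi_iff {K : Type} [Field K] (Δ : SimpComplex V) (C : Fin k → List V)
    (a : (Fin k ⊕ Fin k) →₀ ℕ) :
    monomial a (1 : K) ∈ uniformFaceIdeal K Δ C ↔ ∃ σ ∈ Δ.faces, expF C σ ≤ a := by
  classical
  rw [ufi_eq, mem_ideal_span_monomial_image]
  rw [support_monomial, if_neg one_ne_zero]
  constructor
  · intro h
    obtain ⟨si, ⟨σ, hσ, rfl⟩, hle⟩ := h a (Finset.mem_singleton_self a)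
    exact ⟨σ, hσ, hle⟩
  · rintro ⟨σ, hσ, hle⟩ xi hxi
    rw [Finset.mem_singleton] at hxi
    subst hxi
    exact ⟨expF C σ, ⟨σ, hσ, rfl⟩, hle⟩

lemma sum_expF (C : Fin k → List V) (σ : Finset V) :
    ∑ s : Fin k ⊕ Fin k, expF C σ s = ∑ i : Fin k, (C i).length := by
  rw [Fintype.sum_sum_type]
  simp only [expF_inl, expF_inr]
  rw [← Finset.sum_add_distrib]
  apply Finset.sum_congr rfl
  intro i _
  have := eVec_le_length C σ i
  omega

lemma finsupp_eq_of_le_sum {f g : (Fin k ⊕ Fin k) →₀ ℕ} (h : f ≤ g)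
    (hs : ∑ s : Fin k ⊕ Fin k, g s ≤ ∑ s : Fin k ⊕ Fin k, f s) : f = g := by
  have h1 := Finsupp.le_def.mp h
  ext s
  by_contra hne
  have : ∑ s : Fin k ⊕ Fin k, f s < ∑ s : Fin k ⊕ Fin k, g s :=
    Finset.sum_lt_sum (fun i _ => h1 i) ⟨s, Finset.mem_univ _, lt_of_le_of_ne (h1 s) hne⟩
  omega

lemma shift_apply_inl (a : (Fin k ⊕ Fin k) →₀ ℕ) (i i' : Fin k) :
    ((a - Finsupp.single (Sum.inr i) 1 + Finsupp.single (Sum.inl i) 1 : (Fin k ⊕ Fin k) →₀ ℕ)) (Sum.inl i')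
      = a (Sum.inl i') + (if i' = i then 1 else 0) := by
  rw [Finsupp.add_apply, Finsupp.tsub_apply, Finsupp.single_apply, Finsupp.single_apply,
    if_neg (by simp)]
  simp only [Nat.sub_zero]
  congr 1
  by_cases h : i' = i
  · subst h; simp
  · rw [if_neg (by simpa using fun he : i = i' => h he.symm), if_neg h]

lemma shift_apply_inr (a : (Fin k ⊕ Fin k) →₀ ℕ) (i i' : Fin k) :
    ((a - Finsupp.single (Sum.inr i) 1 + Finsupp.single (Sum.inl i) 1 : (Fin k ⊕ Fin k) →₀ ℕ)) (Sum.inr i')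
      = a (Sum.inr i') - (if i' = i then 1 else 0) := by
  rw [Finsupp.add_apply, Finsupp.tsub_apply, Finsupp.single_apply, Finsupp.single_apply,
    if_neg (show ¬(Sum.inl i = Sum.inr i') by simp), add_zero]
  congr 1
  by_cases h : i' = i
  · subst h; simp
  · rw [if_neg (by simpa using fun he : i = i' => h he.symm), if_neg h]

lemma sum_shift (a : (Fin k ⊕ Fin k) →₀ ℕ) (i : Fin k) (h : 1 ≤ a (Sum.inr i)) :
    ∑ s : Fin k ⊕ Fin k,
      ((a - Finsupp.single (Sum.inr i) 1 + Finsupp.single (Sum.inl i) 1 : (Fin k ⊕ Fin k) →₀ ℕ)) s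
      = ∑ s : Fin k ⊕ Fin k, a s := by
  rw [Fintype.sum_sum_type, Fintype.sum_sum_type]
  simp only [shift_apply_inl, shift_apply_inr]
  rw [← Finset.add_sum_erase Finset.univ
      (fun i' => a (Sum.inl i') + (if i' = i then 1 else 0)) (Finset.mem_univ i),
    ← Finset.add_sum_erase Finset.univ
      (fun i' => a (Sum.inr i') - (if i' = i then 1 else 0)) (Finset.mem_univ i),
    ← Finset.add_sum_erase Finset.univ (fun i' => a (Sum.inl i')) (Finset.mem_univ i),
    ← Finset.add_sum_erase Finset.univ (fun i' => a (Sum.inr i')) (Finset.mem_univ i)]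
  have h1 : ∑ i' ∈ Finset.univ.erase i, (a (Sum.inl i') + (if i' = i then 1 else 0))
      = ∑ i' ∈ Finset.univ.erase i, a (Sum.inl i') := by
    apply Finset.sum_congr rfl
    intro i' hi'
    rw [if_neg (Finset.mem_erase.mp hi').1, add_zero]
  have h2 : ∑ i' ∈ Finset.univ.erase i, (a (Sum.inr i') - (if i' = i then 1 else 0))
      = ∑ i' ∈ Finset.univ.erase i, a (Sum.inr i') := by
    apply Finset.sum_congr rfl
    intro i' hi'
    rw [if_neg (Finset.mem_erase.mp hi').1, Nat.sub_zero]
  rw [h1, h2]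
  simp only [if_pos]
  omega

/-- The key decrement lemma. -/
lemma decrement (hC : IsOrderedColouring Δ C) (hCn : IsNestingOrdered Δ C)
    {σ : Finset V} (hσ : σ ∈ Δ.faces) {i : Fin k} {j : ℕ} (h : eVec C σ i = j + 1) :
    ∃ σ' ∈ Δ.faces, eVec C σ' i = j ∧ ∀ i' ≠ i, eVec C σ' i' = eVec C σ i' := by
  obtain ⟨hj, hmem, hfirst⟩ := eVec_succ_elim h
  set v := (C i)[j]'hj with hv
  have hvCi : v ∈ C i := List.getElem_mem hj
  have hother : ∀ (τ : Finset V) (i' : Fin k), i' ≠ i →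
      (∀ w ∈ C i', (w ∈ τ ↔ w ∈ σ)) → eVec C τ i' = eVec C σ i' := by
    intro τ i' _ hw
    exact eVec_congr hw
  cases j with
  | zero =>
    refine ⟨σ.erase v, Δ.down_closed hσ (Finset.erase_subset _ _), ?_, ?_⟩
    · apply eVec_eq_zero
      intro w hw hwer
      have hwσ : w ∈ σ := (Finset.mem_erase.mp hwer).2
      have : w = v := indep_unique (hC.2.2 i) hσ hw hvCi hwσ hmem
      exact (Finset.mem_erase.mp hwer).1 this
    · intro i' hi'
      apply eVec_congr
      intro w hw
      have hwv : w ≠ v := fun he => not_mem_other_class hC hvCi hi' (he ▸ hw)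
      simp [Finset.mem_erase, hwv]
  | succ j' =>
    have hj' : j' < (C i).length := by omega
    set v' := (C i)[j']'hj' with hv'
    have hv'Ci : v' ∈ C i := List.getElem_mem hj'
    have hvv' : v' ≠ v := fun he => by
      have := ((hC.1 i).getElem_inj_iff).mp he
      omega
    have hlink : Δ.link v ⊆ Δ.link v' := by
      have := (List.pairwise_iff_getElem.mp (hCn i)) j' (j' + 1) hj' hj (Nat.lt_succ_self j')
      exact this
    have herase : σ.erase v ∈ Δ.link v :=
      ⟨Δ.down_closed hσ (Finset.erase_subset _ _), Finset.notMem_erase _ _,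
        by rw [Finset.insert_erase hmem]; exact hσ⟩
    obtain ⟨hf1, hf2, hf3⟩ := hlink herase
    refine ⟨insert v' (σ.erase v), hf3, ?_, ?_⟩
    · apply eVec_eq_succ hj' (Finset.mem_insert_self _ _)
      intro j'' h'' hmem''
      rcases Finset.mem_insert.mp hmem'' with he | hin
      · have := ((hC.1 i).getElem_inj_iff).mp he
        omega
      · exact hfirst j'' (by omega) (Finset.mem_of_mem_erase hin)
    · intro i' hi'
      apply eVec_congr
      intro w hw
      have hwv : w ≠ v := fun he => not_mem_other_class hC hvCi hi' (he ▸ hw)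
      have hwv' : w ≠ v' := fun he => not_mem_other_class hC hv'Ci hi' (he ▸ hw)
      simp [Finset.mem_insert, Finset.mem_erase, hwv, hwv']

end Aux

section Main

variable {n m N k : ℕ} (K : Type) [Field K]

lemma mem_prod_iff (Δ : SimpComplex (Fin n)) (Γ : SimpComplex (Fin m))
    (C : Fin k → List (Fin n)) (D : Fin k → List (Fin m)) (a : (Fin k ⊕ Fin k) →₀ ℕ) :
    monomial a (1 : K) ∈ uniformFaceIdeal K Δ C * uniformFaceIdeal K Γ D ↔
      ∃ σ ∈ Δ.faces, ∃ τ ∈ Γ.faces, expF C σ + expF D τ ≤ a := by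
  have hspan : uniformFaceIdeal K Δ C * uniformFaceIdeal K Γ D =
      Ideal.span ((fun e => monomial e (1 : K)) ''
        {e | ∃ σ ∈ Δ.faces, ∃ τ ∈ Γ.faces, e = expF C σ + expF D τ}) := by
    rw [ufi_eq, ufi_eq, Ideal.span_mul_span']
    congr 1
    ext p
    simp only [Set.mem_mul, Set.mem_image, Set.mem_setOf_eq]
    constructor
    · rintro ⟨_, ⟨e1, ⟨σ, hσ, rfl⟩, rfl⟩, _, ⟨e2, ⟨τ, hτ, rfl⟩, rfl⟩, rfl⟩
      exact ⟨expF C σ + expF D τ, ⟨σ, hσ, τ, hτ, rfl⟩, by rw [monomial_mul, one_mul]⟩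
    · rintro ⟨_, ⟨σ, hσ, τ, hτ, rfl⟩, rfl⟩
      exact ⟨_, ⟨_, ⟨σ, hσ, rfl⟩, rfl⟩, _, ⟨_, ⟨τ, hτ, rfl⟩, rfl⟩,
        by rw [monomial_mul, one_mul]⟩
  classical
  rw [hspan, mem_ideal_span_monomial_image]
  rw [support_monomial, if_neg one_ne_zero]
  constructor
  · intro h
    obtain ⟨si, ⟨σ, hσ, τ, hτ, rfl⟩, hle⟩ := h a (Finset.mem_singleton_self a)
    exact ⟨σ, hσ, τ, hτ, hle⟩
  · rintro ⟨σ, hσ, τ, hτ, hle⟩ xi hxi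
    rw [Finset.mem_singleton] at hxi
    subst hxi
    exact ⟨_, ⟨σ, hσ, τ, hτ, rfl⟩, hle⟩

lemma borel_prod (Δ : SimpComplex (Fin n)) (Γ : SimpComplex (Fin m))
    (C : Fin k → List (Fin n)) (D : Fin k → List (Fin m))
    (hC : IsOrderedColouring Δ C) (hD : IsOrderedColouring Γ D)
    (hCn : IsNestingOrdered Δ C) (hDn : IsNestingOrdered Γ D) :
    IsQkBorel (uniformFaceIdeal K Δ C * uniformFaceIdeal K Γ D) := by
  intro a ha i hi
  obtain ⟨σ, hσ, τ, hτ, hle⟩ := (mem_prod_iff K Δ Γ C D a).mp ha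
  have hle' := Finsupp.le_def.mp hle
  rw [mem_prod_iff]
  -- helper to finish given faces with the right eVec data
  have finish : ∀ (σ' : Finset (Fin n)) (τ' : Finset (Fin m)), σ' ∈ Δ.faces → τ' ∈ Γ.faces →
      (eVec C σ' i + eVec D τ' i + 1 = eVec C σ i + eVec D τ i ∨
        (eVec C σ' i = eVec C σ i ∧ eVec D τ' i = eVec D τ i ∧
          eVec C σ i = 0 ∧ eVec D τ i = 0)) →
      (∀ i' ≠ i, eVec C σ' i' = eVec C σ i' ∧ eVec D τ' i' = eVec D τ i') →
      ∃ σ'' ∈ Δ.faces, ∃ τ'' ∈ Γ.faces, expF C σ'' + expF D τ'' ≤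
        a - Finsupp.single (Sum.inr i) 1 + Finsupp.single (Sum.inl i) 1 := by
    intro σ' τ' hσ' hτ' hcase hoth
    refine ⟨σ', hσ', τ', hτ', Finsupp.le_def.mpr ?_⟩
    rintro (i' | i')
    · rw [Finsupp.add_apply, expF_inl, expF_inl, shift_apply_inl]
      have hC1 := eVec_le_length C σ i
      have hD1 := eVec_le_length D τ i
      have hC2 := eVec_le_length C σ' i'
      have hD2 := eVec_le_length D τ' i'
      have hl := hle' (Sum.inl i')
      rw [Finsupp.add_apply, expF_inl, expF_inl] at hl
      by_cases h : i' = i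
      · subst h
        rw [if_pos rfl]
        rcases hcase with hc | ⟨hc1, hc2, hc3, hc4⟩ <;> omega
      · rw [if_neg h]
        obtain ⟨h1, h2⟩ := hoth i' h
        omega
    · rw [Finsupp.add_apply, expF_inr, expF_inr, shift_apply_inr]
      have hr := hle' (Sum.inr i')
      rw [Finsupp.add_apply, expF_inr, expF_inr] at hr
      by_cases h : i' = i
      · subst h
        rw [if_pos rfl]
        rcases hcase with hc | ⟨hc1, hc2, hc3, hc4⟩ <;> omega
      · rw [if_neg h]
        obtain ⟨h1, h2⟩ := hoth i' h
        omega
  by_cases hc : eVec C σ i = 0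
  · by_cases hd : eVec D τ i = 0
    · exact finish σ τ hσ hτ (Or.inr ⟨rfl, rfl, hc, hd⟩) (fun i' _ => ⟨rfl, rfl⟩)
    · obtain ⟨j, hj⟩ := Nat.exists_eq_succ_of_ne_zero hd
      obtain ⟨τ', hτ', he1, he2⟩ := decrement hD hDn hτ hj
      exact finish σ τ' hσ hτ' (Or.inl (by omega)) (fun i' hi' => ⟨rfl, he2 i' hi'⟩)
  · obtain ⟨j, hj⟩ := Nat.exists_eq_succ_of_ne_zero hc
    obtain ⟨σ', hσ', he1, he2⟩ := decrement hC hCn hσ hj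
    exact finish σ' τ hσ' hτ (Or.inl (by omega)) (fun i' hi' => ⟨he2 i' hi', rfl⟩)

/-- Corollary 5.3: if `𝒞` and `𝒟` are nested `k`-colourings of `Δ` and `Γ`
endowed with nesting orders, and `I(Δ,𝒞)·I(Γ,𝒟) = I(S,ℰ)` for a simplicial complex `S` with
ordered proper vertex `k`-colouring `ℰ`, then `ℰ` is nested and endowed with the nesting
order; equivalently, the product ideal is `Q_k`-Borel. -/
theorem stmt8 {n m N k : ℕ} (K : Type) [Field K]
    (Δ : SimpComplex (Fin n)) (Γ : SimpComplex (Fin m)) (S : SimpComplex (Fin N))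
    (C : Fin k → List (Fin n)) (D : Fin k → List (Fin m)) (E : Fin k → List (Fin N))
    (hC : IsOrderedColouring Δ C) (hD : IsOrderedColouring Γ D)
    (hCn : IsNestingOrdered Δ C) (hDn : IsNestingOrdered Γ D)
    (hE : IsOrderedColouring S E)
    (hprod : uniformFaceIdeal K Δ C * uniformFaceIdeal K Γ D = uniformFaceIdeal K S E) :
    IsNestingOrdered S E ∧
    IsQkBorel (uniformFaceIdeal K Δ C * uniformFaceIdeal K Γ D) := by
  have hB : IsQkBorel (uniformFaceIdeal K Δ C * uniformFaceIdeal K Γ D) :=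
    borel_prod K Δ Γ C D hC hD hCn hDn
  refine ⟨?_, hB⟩
  have hBS : IsQkBorel (uniformFaceIdeal K S E) := hprod ▸ hB
  intro i
  letI : IsTrans (Fin N) (fun v u => S.link u ⊆ S.link v) :=
    ⟨fun a b c hab hbc => hbc.trans hab⟩
  rw [← List.isChain_iff_pairwise, List.isChain_iff_getElem]
  intro j hj
  intro τ hτ
  obtain ⟨hτf, huτ, hins⟩ := hτ
  have hjlen : j + 1 < (E i).length := by omega
  have hjlen0 : j < (E i).length := by omega
  set u := (E i)[j + 1]'hjlen with hu
  set v := (E i)[j]'hjlen0 with hvdef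
  set σ := insert u τ with hσdef
  have hσ : σ ∈ S.faces := hins
  have huσ : u ∈ σ := Finset.mem_insert_self _ _
  have heσ : eVec E σ i = (j + 1) + 1 := eVec_face_of_mem hE hσ hjlen huσ
  set a := expF E σ with hadef
  have ha : monomial a (1 : K) ∈ uniformFaceIdeal K S E :=
    (mem_ufi_iff S E a).mpr ⟨σ, hσ, le_refl _⟩
  have hainr : a (Sum.inr i) = (j + 1) + 1 := by rw [hadef, expF_inr, heσ]
  have hb := hBS a ha i (by omega)
  obtain ⟨ρ, hρ, hρle⟩ := (mem_ufi_iff S E _).mp hb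
  have heq : expF E ρ
      = (a - Finsupp.single (Sum.inr i) 1 + Finsupp.single (Sum.inl i) 1) := by
    apply finsupp_eq_of_le_sum hρle
    rw [sum_shift a i (by omega), hadef, sum_expF, sum_expF]
  have hρi : eVec E ρ i = j + 1 := by
    have h1 := congrArg (fun f : (Fin k ⊕ Fin k) →₀ ℕ => f (Sum.inr i)) heq
    rw [expF_inr, shift_apply_inr, if_pos rfl, hainr] at h1
    omega
  have hvρ : v ∈ ρ := (mem_face_iff_eVec hE hρ hjlen0).mpr hρi
  have hτρ : τ ⊆ ρ := by
    intro w hw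
    have hwσ : w ∈ σ := Finset.mem_insert_of_mem hw
    obtain ⟨iw, hiw, -⟩ := hE.2.1 w
    obtain ⟨jw, hjw, hjweq⟩ := List.mem_iff_getElem.mp hiw
    have hiwne : iw ≠ i := by
      intro he
      subst he
      have : w = u := indep_unique (hE.2.2 iw) hσ hiw (List.getElem_mem hjlen) hwσ huσ
      exact huτ (this ▸ hw)
    have heρ : eVec E ρ iw = eVec E σ iw := by
      have h1 := congrArg (fun f : (Fin k ⊕ Fin k) →₀ ℕ => f (Sum.inr iw)) heq
      rw [expF_inr, shift_apply_inr, if_neg hiwne, hadef, expF_inr] at h1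
      omega
    have hwσe : eVec E σ iw = jw + 1 := eVec_face_of_mem hE hσ hjw (hjweq ▸ hwσ)
    have : (E iw)[jw] ∈ ρ := (mem_face_iff_eVec hE hρ hjw).mpr (by rw [heρ, hwσe])
    exact hjweq ▸ this
  have hvτ : v ∉ τ := by
    intro hvt
    have hvσ : v ∈ σ := Finset.mem_insert_of_mem hvt
    have hveq : v = u := indep_unique (hE.2.2 i) hσ (List.getElem_mem hjlen0)
      (List.getElem_mem hjlen) hvσ huσ
    have := ((hE.1 i).getElem_inj_iff).mp hveq
    omega
  exact ⟨hτf, hvτ, S.down_closed hρ (Finset.insert_subset hvρ hτρ)⟩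


end Main
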